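/- For every graph G with n vertices and m edges and every height h, there exists a merge DAG (D, ξ) of the family of unfolding trees (F_h^v)_{v ∈ V(G)} such that D has at most n·(h+1) nodes and at most 2m·h edges, the nodes of D are partitioned into h+1 layers with each graph vertex represented exactly once per layer, and the edges between two consecutive layers correspond exactly to the edges of G; i.e., merging the unfolding trees of all vertices yields the layered computation DAG of message passing. -/

import Mathlib

open scoped Classical

universe u v

/-- A rooted labeled (unordered) tree: a root label together with a list of
child subtrees.  The list order is irrelevant for the isomorphism relation. -/
inductive LTree (L : Type u) : Type u
  | node : L → List (LTree L) → LTree L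

namespace LTree

variable {L : Type u} {L' C : Type v}

/-- The label of the root. -/
def label : LTree L → L
  | node a _ => a

/-- The child subtrees of the root. -/
def children : LTree L → List (LTree L)
  | node _ ts => ts

/-- Isomorphism of rooted labeled trees: there is a bijection between the node
sets preserving the root, the parent–child relation and node labels; for our
representation this means equal root labels and children that correspond, up to
a permutation, to pairwise isomorphic subtrees. -/
inductive Iso : LTree L → LTree L → Prop
  | node (a : L) {ts us vs : List (LTree L)} :
      List.Forall₂ Iso ts vs → vs.Perm us → Iso (node a ts) (node a us)

/-- `Embeds t s` : `t` is an induced rooted subtree of `s`, i.e. the nodes of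
`t` inject into the nodes of `s` preserving the root, labels and the
parent–child relation. -/
inductive Embeds : LTree L → LTree L → Prop
  | node (a : L) {ts us vs : List (LTree L)} :
      List.Forall₂ Embeds ts vs → vs.Subperm us → Embeds (node a ts) (node a us)

/-- Number of nodes of a rooted tree. -/
def size : LTree L → ℕ
  | node _ ts => 1 + (ts.attach.map (fun c => size c.1)).sum
decreasing_by simp_wf; have := List.sizeOf_lt_of_mem c.2; omega

/-- Relabel a tree by `f`. -/
def map (f : L → L') : LTree L → LTree L'
  | node a ts => node (f a) (ts.attach.map (fun c => map f c.1))
decreasing_by simp_wf; have := List.sizeOf_lt_of_mem c.2; omega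

/-- Number of nodes of the tree carrying label `x`. -/
def countLabel [DecidableEq L] (x : L) : LTree L → ℕ
  | node a ts => (if a = x then 1 else 0) + (ts.attach.map (fun c => countLabel x c.1)).sum
decreasing_by simp_wf; have := List.sizeOf_lt_of_mem c.2; omega

/-- Number of nodes at depth `d` carrying label `x`. -/
def countAt [DecidableEq L] (x : L) : ℕ → LTree L → ℕ
  | 0, node a _ => if a = x then 1 else 0
  | d+1, node _ ts => (ts.attach.map (fun c => countAt x d c.1)).sum
termination_by _ t => sizeOf t
decreasing_by simp_wf; have := List.sizeOf_lt_of_mem c.2; omega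

/-- `SubtreeAt t d s` : `s` is the subtree of `t` rooted at one of the nodes of
`t` at depth `d`. -/
inductive SubtreeAt : LTree L → ℕ → LTree L → Prop
  | refl (t : LTree L) : SubtreeAt t 0 t
  | step {t c s : LTree L} {d : ℕ} : c ∈ t.children → SubtreeAt c d s → SubtreeAt t (d+1) s

/-- The AHU canonical value: `ahu f t = f (label t) {{ ahu f c | c child of t }}`,
computed bottom-up (a leaf gets `f (label) ∅`). -/
noncomputable def ahu (f : L → Multiset C → C) : LTree L → C
  | node a ts => f a (↑(ts.attach.map (fun c => ahu f c.1)) : Multiset C)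
decreasing_by simp_wf; have := List.sizeOf_lt_of_mem c.2; omega

end LTree

/-- A labeled DAG: finitely many nodes, each with a label and a list of children
(parallel edges are allowed), together with a rank function witnessing
acyclicity (children have strictly smaller rank). -/
structure LDag (L : Type u) where
  size : ℕ
  label : Fin size → L
  children : Fin size → List (Fin size)
  rank : Fin size → ℕ
  rank_lt : ∀ {i j}, j ∈ children i → rank j < rank i

namespace LDag

variable {L : Type u}

/-- The unfolding of a node of a DAG into a rooted labeled tree, obtained by
recursively expanding the node and its children. -/
def unfold (D : LDag L) (p : Fin D.size) : LTree L :=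
  .node (D.label p) ((D.children p).attach.map (fun q => D.unfold q.1))
termination_by D.rank p
decreasing_by exact D.rank_lt q.2

/-- Total number of edges of the DAG (counted with multiplicity). -/
def edgeCount (D : LDag L) : ℕ := ∑ p : Fin D.size, (D.children p).length

end LDag

section Graph

variable {V : Type u} {X : Type v}

/-- The unfolding tree `F_i^v` of height `i` of the vertex `v`, with node labels
given by `μ` (a node representing the graph vertex `x` is labeled `μ x`). -/
noncomputable def SimpleGraph.unfoldingTree (G : SimpleGraph V) [Fintype V] (μ : V → X) :
    ℕ → V → LTree X
  | 0, u => .node (μ u) []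
  | i+1, u => .node (μ u) ((G.neighborFinset u).toList.map (G.unfoldingTree μ i))

/-- Auxiliary recursion for `k`-redundant neighborhood trees: `r` is the root
vertex, `d` is the current depth and `x` the currently represented vertex.  A
neighbor `y` is kept at depth `d + 1` iff `d + 1 ≤ dist r y + k`; since the
minimal depth at which `y` occurs in the unfolding tree rooted at `r` is
`dist r y`, this is exactly the pruning condition
`depth(u) ≤ depth(w) + k` for all nodes `w` with `φ(u) = φ(w)`. -/
noncomputable def SimpleGraph.ntAux (G : SimpleGraph V) [Fintype V] (μ : V → X)
    (r : V) (k : ℕ) : ℕ → ℕ → V → LTree X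
  | 0, _, x => .node (μ x) []
  | i+1, d, x => .node (μ x)
      (((G.neighborFinset x).filter (fun y => d + 1 ≤ G.dist r y + k)).toList.map
        (G.ntAux μ r k i (d+1)))

/-- The `k`-redundant neighborhood tree `T_{i,k}^v` of height `i` of vertex `v`. -/
noncomputable def SimpleGraph.ntTree (G : SimpleGraph V) [Fintype V] (μ : V → X)
    (i k : ℕ) (v : V) : LTree X :=
  G.ntAux μ v k i 0 v

end Graph

theorem LTree.Iso.refl {L : Type u} : ∀ t : LTree L, LTree.Iso t t
  | .node a ts => .node a (List.forall₂_same.2 fun t _ => LTree.Iso.refl t) (List.Perm.refl ts)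
decreasing_by have := List.sizeOf_lt_of_mem ‹t ∈ ts›; simp_wf; omega

noncomputable def layerEquiv (V : Type u) [Fintype V] (h : ℕ) :
    Fin (Fintype.card (V × Fin (h + 1))) ≃ V × Fin (h + 1) :=
  (Fintype.equivFin _).symm

noncomputable def layerChildren {V : Type u} [Fintype V] (G : SimpleGraph V) (h : ℕ)
    (x : V × Fin (h + 1)) : List (Fin (Fintype.card (V × Fin (h + 1)))) :=
  if ((x.2 : ℕ)) = 0 then []
  else ((G.neighborFinset x.1).toList.map
    (fun u => (layerEquiv V h).symm
      (u, ⟨(x.2 : ℕ) - 1, lt_of_le_of_lt (Nat.sub_le _ _) x.2.isLt⟩)))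

noncomputable def layerDag {V : Type u} {X : Type v} [Fintype V]
    (G : SimpleGraph V) (μ : V → X) (h : ℕ) : LDag X where
  size := Fintype.card (V × Fin (h + 1))
  label p := μ (layerEquiv V h p).1
  children p := layerChildren G h (layerEquiv V h p)
  rank p := ((layerEquiv V h p).2 : ℕ)
  rank_lt := by
    intro i j hj
    unfold layerChildren at hj
    split at hj
    · simp at hj
    · rcases List.mem_map.1 hj with ⟨u, _, rfl⟩
      simp only [Equiv.apply_symm_apply]
      omega

theorem layerChildren_symm {V : Type u} {X : Type v} [Fintype V]
    (G : SimpleGraph V) (μ : V → X) (h : ℕ) (x : V × Fin (h + 1)) :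
    (layerDag G μ h).children ((layerEquiv V h).symm x) = layerChildren G h x :=
  congrArg (layerChildren G h) (Equiv.apply_symm_apply _ _)

theorem layerLabel_symm {V : Type u} {X : Type v} [Fintype V]
    (G : SimpleGraph V) (μ : V → X) (h : ℕ) (x : V × Fin (h + 1)) :
    (layerDag G μ h).label ((layerEquiv V h).symm x) = μ x.1 :=
  congrArg (fun y : V × Fin (h + 1) => μ y.1) (Equiv.apply_symm_apply _ _)

/-- For every graph `G` with `n` vertices and `m` edges and
every height `h`, there is a merge DAG `(D, ξ)` of the family of unfolding
trees `(F_h^v)_{v ∈ V(G)}` with at most `n·(h+1)` nodes and at most `2m·h`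
edges, whose nodes are partitioned into `h+1` layers with each graph vertex
represented exactly once per layer (witnessed by the equivalence `e`), such
that the edges between two consecutive layers correspond exactly to the edges
of `G`: the layered computation DAG of message passing. -/
theorem mergeDag_of_unfoldingTrees {V : Type u} {X : Type v} [Fintype V]
    (G : SimpleGraph V) (μ : V → X) (h : ℕ) :
    ∃ (D : LDag X) (ξ : V → Fin D.size) (e : Fin D.size ≃ V × Fin (h + 1)),
      (∀ v : V, LTree.Iso (D.unfold (ξ v)) (G.unfoldingTree μ h v)) ∧
      (∀ v : V, ξ v = e.symm (v, Fin.last h)) ∧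
      (∀ p : Fin D.size, D.label p = μ (e p).1) ∧
      (∀ p q : Fin D.size, q ∈ D.children p ↔
        (G.Adj (e p).1 (e q).1 ∧ ((e q).2 : ℕ) + 1 = ((e p).2 : ℕ))) ∧
      D.size ≤ Fintype.card V * (h + 1) ∧
      D.edgeCount ≤ 2 * G.edgeFinset.card * h := by
  refine ⟨layerDag G μ h, fun v => (layerEquiv V h).symm (v, Fin.last h), layerEquiv V h,
    ?_, fun v => rfl, fun p => rfl, ?_, ?_, ?_⟩
  · -- unfold equals unfolding tree
    have key : ∀ (j : ℕ) (hj : j < h + 1) (v : V),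
        (layerDag G μ h).unfold ((layerEquiv V h).symm (v, ⟨j, hj⟩)) =
          G.unfoldingTree μ j v := by
      intro j
      induction j with
      | zero =>
        intro hj v
        erw [LDag.unfold.eq_1]; rw [layerChildren_symm, layerLabel_symm]
        have : layerChildren G h ((v, ⟨0, hj⟩) : V × Fin (h + 1)) = [] := by
          unfold layerChildren; simp
        rw [this]
        rfl
      | succ j ih =>
        intro hj v
        erw [LDag.unfold.eq_1]; rw [layerChildren_symm, layerLabel_symm]
        have hc : layerChildren G h ((v, ⟨j + 1, hj⟩) : V × Fin (h + 1)) =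
            (G.neighborFinset v).toList.map
              (fun u => (layerEquiv V h).symm (u, ⟨j, Nat.lt_of_succ_lt hj⟩)) := by
          unfold layerChildren
          rw [if_neg (Nat.succ_ne_zero j)]
          rfl
        rw [hc]
        show LTree.node (μ v) _ = LTree.node (μ v) _
        congr 1
        erw [List.attach_map_val, List.map_map]
        refine List.map_congr_left fun u hu => ?_
        exact ih (Nat.lt_of_succ_lt hj) u
    intro v
    have := key h (Nat.lt_succ_self h) v
    have hl : (Fin.last h) = (⟨h, Nat.lt_succ_self h⟩ : Fin (h + 1)) := rfl
    rw [hl, this]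
    exact LTree.Iso.refl _
  · -- edge characterization
    intro p q
    show q ∈ (layerDag G μ h).children p ↔
      (G.Adj ((layerEquiv V h) p).1 ((layerEquiv V h) q).1 ∧
        (((layerEquiv V h) q).2 : ℕ) + 1 = (((layerEquiv V h) p).2 : ℕ))
    constructor
    · intro hq
      replace hq : q ∈ layerChildren G h ((layerEquiv V h) p) := hq
      unfold layerChildren at hq
      split at hq
      · cases hq
      · rcases List.mem_map.1 hq with ⟨u, hu, hqq⟩
        have hq2 : (layerEquiv V h) q = (u, ⟨(((layerEquiv V h) p).2 : ℕ) - 1,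
            lt_of_le_of_lt (Nat.sub_le _ _) ((layerEquiv V h) p).2.isLt⟩) := by
          rw [← hqq]; exact Equiv.apply_symm_apply _ _
        rw [hq2]
        refine ⟨(SimpleGraph.mem_neighborFinset _ _ _).1 (Finset.mem_toList.1 hu), ?_⟩
        simp only
        omega
    · rintro ⟨hadj, hlev⟩
      show q ∈ layerChildren G h ((layerEquiv V h) p)
      unfold layerChildren
      rw [if_neg (by omega)]
      refine List.mem_map.2 ⟨((layerEquiv V h) q).1, ?_, ?_⟩
      · exact Finset.mem_toList.2 ((SimpleGraph.mem_neighborFinset _ _ _).2 hadj)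
      · have hfin : (⟨(((layerEquiv V h) p).2 : ℕ) - 1,
            lt_of_le_of_lt (Nat.sub_le _ _) ((layerEquiv V h) p).2.isLt⟩ : Fin (h+1))
            = ((layerEquiv V h) q).2 := by
          apply Fin.ext; simp only; omega
        rw [hfin, Prod.mk.eta]; exact Equiv.symm_apply_apply _ _
  · -- size bound
    have hs : (layerDag G μ h).size = Fintype.card (V × Fin (h + 1)) := rfl
    rw [hs, Fintype.card_prod, Fintype.card_fin]
  · -- edge count bound
    have hlen : ∀ p : Fin (layerDag G μ h).size, ((layerDag G μ h).children p).length =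
        if (((layerEquiv V h) p).2 : ℕ) = 0 then 0 else G.degree ((layerEquiv V h) p).1 := by
      intro p
      show (layerChildren G h ((layerEquiv V h) p)).length = _
      unfold layerChildren
      rw [apply_ite List.length]
      simp [SimpleGraph.card_neighborFinset_eq_degree]
    have hEC : (layerDag G μ h).edgeCount = ∑ p : Fin (Fintype.card (V × Fin (h + 1))),
        (if (((layerEquiv V h) p).2 : ℕ) = 0 then 0 else G.degree ((layerEquiv V h) p).1) := by
      unfold LDag.edgeCount
      exact Finset.sum_congr rfl fun p _ => hlen p
    rw [hEC, ← Equiv.sum_comp (layerEquiv V h).symm fun p =>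
      (if (((layerEquiv V h) p).2 : ℕ) = 0 then 0 else G.degree ((layerEquiv V h) p).1)]
    have hfun : ∀ x : V × Fin (h + 1),
        (if (((layerEquiv V h) ((layerEquiv V h).symm x)).2 : ℕ) = 0 then 0
          else G.degree (((layerEquiv V h) ((layerEquiv V h).symm x)).1))
        = (if (x.2 : ℕ) = 0 then 0 else G.degree x.1) := by
      intro x
      rw [Equiv.apply_symm_apply]
    rw [Finset.sum_congr rfl fun x _ => hfun x]
    rw [Fintype.sum_prod_type]
    dsimp only
    rw [Finset.sum_comm]
    have hdeg : ∑ v : V, G.degree v = 2 * G.edgeFinset.card :=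
      G.sum_degrees_eq_twice_card_edges
    have hterm : ∀ j : Fin (h+1), (∑ v : V, if ((j : Fin (h+1)) : ℕ) = 0 then 0 else G.degree v)
        = if ((j : Fin (h+1)) : ℕ) = 0 then 0 else 2 * G.edgeFinset.card := by
      intro j
      split
      · simp
      · exact hdeg
    rw [Finset.sum_congr rfl fun j _ => hterm j]
    rw [Fin.sum_univ_succ]
    simp [mul_comm]
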